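/- For T = (T_1,…,T_n) in the noncommutative domain D_f(H), define the Poisson kernel K_{f,T} : H → F²(H_n) ⊗ D̄, K_{f,T} h = Σ_{α∈F_n^+} √(b_α) e_α ⊗ Δ_{f,T} T_α* h, where Δ_{f,T} = (I − Σ_{|α|≥1} a_α T_α T_α*)^{1/2} and D̄ = closure of Δ_{f,T}H. Then K_{f,T} is a contraction with K_{f,T}* K_{f,T} = I − Q_{f,T} (where Q_{f,T} = SOT-lim Φ_{f,T}^m(I)), and K_{f,T} T_i* = (W_i* ⊗ I_H) K_{f,T} for i = 1,…,n. In particular, K_{f,T} is an isometry if and only if Q_{f,T} = 0. -/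

import Mathlib

open Filter Topology
open scoped ComplexConjugate ENNReal

namespace NCDomain

/-- Words in the free monoid `F_n^+` on `n` generators. -/
abbrev Word (n : ℕ) := FreeMonoid (Fin n)

instance {n : ℕ} : DecidableEq (Word n) :=
  inferInstanceAs (DecidableEq (List (Fin n)))

/-- The length `|α|` of a word. -/
def wordLen {n : ℕ} (α : Word n) : ℕ := FreeMonoid.length α

/-- The coefficients `b_α`, defined by `b_{g_0} = 1` and, for `|α| ≥ 1`,
`b_α = Σ_{j=1}^{|α|} Σ_{γ_1⋯γ_j = α, |γ_i| ≥ 1} a_{γ_1}⋯a_{γ_j}`, the sum running over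
all ordered factorizations of `α` into nonempty words. -/
noncomputable def bCoeff {n : ℕ} (a : Word n → ℝ) (α : Word n) : ℝ :=
  if α = 1 then 1
  else ∑' L : {L : List (Word n) // L.prod = α ∧ ∀ w ∈ L, w ≠ 1}, (L.1.map a).prod

/-- `f = Σ_{|α|≥1} a_α X_α` is a positive regular free holomorphic function:
`a_{g_0} = 0`, `a_α ≥ 0`, `a_{g_i} > 0`, and
`limsup_{k→∞} (Σ_{|α|=k} |a_α|²)^{1/(2k)} < ∞`. -/
def PosRegular {n : ℕ} (a : Word n → ℝ) : Prop :=
  a 1 = 0 ∧ (∀ α, 0 ≤ a α) ∧ (∀ i : Fin n, 0 < a (FreeMonoid.of i)) ∧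
    ∃ C : ℝ, ∀ᶠ k in atTop,
      (∑' α : {β : Word n // wordLen β = k}, (a α.1) ^ 2) ≤ C ^ (2 * k)

/-- For a tuple `T` of operators and a word `α = g_{i_1}⋯g_{i_k}`,
the product `T_α = T_{i_1}⋯T_{i_k}` (and `T_{g_0} = I`). -/
noncomputable def opWord {n : ℕ} {H : Type*} [NormedAddCommGroup H] [NormedSpace ℂ H]
    (T : Fin n → H →L[ℂ] H) (α : Word n) : H →L[ℂ] H :=
  ((FreeMonoid.toList α).map T).prod

/-- `Φ` is the completely positive map `Φ(X) = Σ_{|α|≥1} c_α T_α X T_α*`, the series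
converging in the weak operator topology. -/
def IsPhi {n : ℕ} {H : Type*} [NormedAddCommGroup H] [InnerProductSpace ℂ H] [CompleteSpace H]
    (c : Word n → ℝ) (T : Fin n → H →L[ℂ] H) (Φ : (H →L[ℂ] H) → (H →L[ℂ] H)) : Prop :=
  ∀ (X : H →L[ℂ] H) (x y : H),
    HasSum (fun α : {β : Word n // β ≠ 1} =>
      (c α.1 : ℂ) * (inner ℂ (opWord T α.1 (X ((opWord T α.1).adjoint x))) y : ℂ))
      ((inner ℂ (Φ X x) y : ℂ))

/-- Nonempty words. -/
abbrev NEW (n : ℕ) := {β : Word n // β ≠ 1}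

/-- Master index: tuples of nonempty words. -/
abbrev Idx (n : ℕ) := Σ j : ℕ, Fin j → NEW n

/-- Product of a tuple of nonempty words. -/
noncomputable def wprod {n j : ℕ} (t : Fin j → NEW n) : Word n :=
  (List.ofFn fun i => (t i).1).prod

lemma wordLen_eq_zero {n : ℕ} {α : Word n} : wordLen α = 0 ↔ α = 1 :=
  FreeMonoid.length_eq_zero

lemma wprod_nil {n : ℕ} (t : Fin 0 → NEW n) : wprod t = 1 := by
  simp [wprod]

lemma wprod_cons {n j : ℕ} (γ : NEW n) (s : Fin j → NEW n) :
    wprod (Fin.cons γ s) = γ.1 * wprod s := by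
  simp [wprod, List.ofFn_succ]

lemma toList_prod {n : ℕ} (l : List (Word n)) :
    FreeMonoid.toList l.prod = (l.map FreeMonoid.toList).flatten := by
  induction l with
  | nil => rfl
  | cons w l ih => simp [FreeMonoid.toList_mul, ih]

lemma toList_wprod {n j : ℕ} (t : Fin j → NEW n) :
    FreeMonoid.toList (wprod t) = (List.ofFn fun i => FreeMonoid.toList (t i).1).flatten := by
  rw [wprod, toList_prod, List.map_ofFn]; rfl

lemma wordLen_wprod {n j : ℕ} (t : Fin j → NEW n) :
    wordLen (wprod t) = ∑ i, wordLen (t i).1 := by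
  have : wordLen (wprod t) = (FreeMonoid.toList (wprod t)).length := rfl
  rw [this, toList_wprod, List.length_flatten, List.map_ofFn, List.sum_ofFn]
  rfl

/-- Splitting a flatten into pieces of prescribed lengths is unique. -/
lemma flatten_lengths_unique {γ : Type*} :
    ∀ (M1 M2 : List (List γ)), M1.flatten = M2.flatten →
      M1.map List.length = M2.map List.length → M1 = M2 := by
  intro M1
  induction M1 with
  | nil => intro M2 _ hlen; cases M2 with
    | nil => rfl
    | cons b M2 => simp at hlen
  | cons a M1 ih =>
    intro M2 hflat hlen
    cases M2 with
    | nil => simp at hlen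
    | cons b M2 =>
      simp only [List.flatten_cons, List.map_cons, List.cons.injEq] at hflat hlen
      obtain ⟨hab, hrest⟩ := List.append_inj hflat hlen.1
      exact List.cons_eq_cons.mpr ⟨hab, ih M2 hrest hlen.2⟩

/-- The composition of `wordLen α` associated with a factorization. -/
def fibComp {n : ℕ} {α : Word n} (x : {x : Idx n // wprod x.2 = α}) :
    Composition (wordLen α) where
  blocks := List.ofFn fun i => wordLen (x.1.2 i).1
  blocks_pos := by
    intro b hb
    rw [List.mem_ofFn] at hb
    obtain ⟨i, hi⟩ := hb
    subst hi
    exact Nat.pos_of_ne_zero fun hz => (x.1.2 i).2 (wordLen_eq_zero.mp hz)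
  blocks_sum := by
    obtain ⟨x', hx⟩ := x
    show (List.ofFn fun i => wordLen (x'.2 i).1).sum = wordLen α
    rw [List.sum_ofFn, ← hx, wordLen_wprod]

instance fib_finite {n : ℕ} (α : Word n) : Finite {x : Idx n // wprod x.2 = α} := by
  refine Finite.of_injective (fibComp (α := α)) ?_
  rintro ⟨⟨j1, t1⟩, h1⟩ ⟨⟨j2, t2⟩, h2⟩ hxy
  have hblocks := congrArg Composition.blocks hxy
  simp only [fibComp] at hblocks
  have hj : j1 = j2 := by
    have := congrArg List.length hblocks
    simpa using this
  subst hj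
  have hM : (List.ofFn fun i => FreeMonoid.toList (t1 i).1) =
      (List.ofFn fun i => FreeMonoid.toList (t2 i).1) := by
    refine flatten_lengths_unique _ _ ?_ ?_
    · rw [← toList_wprod, ← toList_wprod]
      show FreeMonoid.toList (wprod t1) = FreeMonoid.toList (wprod t2)
      rw [h1, h2]
    · rw [List.map_ofFn, List.map_ofFn]
      exact hblocks
  have ht : t1 = t2 := by
    funext i
    have := congrFun (List.ofFn_inj.mp hM) i
    exact Subtype.ext (FreeMonoid.toList.injective this)
  subst ht
  rfl

/-- The factorization lists appearing in `bCoeff`. -/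
abbrev FactIdx {n : ℕ} (α : Word n) : Type _ :=
  {L : List (Word n) // L.prod = α ∧ ∀ w ∈ L, w ≠ 1}

/-- Map from tuple-factorizations to list-factorizations. -/
def fibToFact {n : ℕ} {α : Word n} (x : {x : Idx n // wprod x.2 = α}) : FactIdx α :=
  ⟨List.ofFn fun i => (x.1.2 i).1, by
    constructor
    · exact x.2
    · intro w hw
      rw [List.mem_ofFn] at hw
      obtain ⟨i, hi⟩ := hw
      exact hi ▸ (x.1.2 i).2⟩

lemma fibToFact_bijective {n : ℕ} (α : Word n) :
    Function.Bijective (fibToFact (n := n) (α := α)) := by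
  constructor
  · rintro ⟨⟨j1, t1⟩, h1⟩ ⟨⟨j2, t2⟩, h2⟩ hxy
    have hL : (List.ofFn fun i => (t1 i).1) = (List.ofFn fun i => (t2 i).1) :=
      congrArg Subtype.val hxy
    have hj : j1 = j2 := by have := congrArg List.length hL; simpa using this
    subst hj
    have ht : t1 = t2 := by
      funext i
      exact Subtype.ext (congrFun (List.ofFn_inj.mp hL) i)
    subst ht
    rfl
  · rintro ⟨L, hprod, hmem⟩
    refine ⟨⟨⟨L.length, fun i => ⟨L.get i, hmem _ (L.get_mem i)⟩⟩, ?_⟩, ?_⟩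
    · show wprod _ = α
      rw [wprod]
      simp only [List.ofFn_get]
      exact hprod
    · apply Subtype.ext
      show (List.ofFn fun i => L.get i) = L
      exact List.ofFn_get L

lemma bIndex_unique_of_one {n : ℕ} (L : FactIdx (1 : Word n)) : L.1 = [] := by
  obtain ⟨L, hprod, hmem⟩ := L
  cases L with
  | nil => rfl
  | cons w L =>
    exfalso
    have : wordLen ((w :: L).prod) = 0 := by rw [hprod]; rfl
    rw [List.prod_cons] at this
    have hw : wordLen w = 0 := by
      have h2 : wordLen w + wordLen L.prod = 0 := by
        show FreeMonoid.length w + FreeMonoid.length L.prod = 0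
        rw [← FreeMonoid.length_mul]
        exact ‹wordLen (w * L.prod) = 0›
      omega
    exact hmem w (by simp) (wordLen_eq_zero.mp hw)

lemma bCoeff_eq_tsum {n : ℕ} (a : Word n → ℝ) (α : Word n) :
    bCoeff a α = ∑' L : FactIdx α, (L.1.map a).prod := by
  rw [bCoeff]
  split_ifs with h
  · subst h
    haveI : Unique (FactIdx (1 : Word n)) :=
      ⟨⟨⟨[], by simp⟩⟩, fun L => Subtype.ext (bIndex_unique_of_one L)⟩
    rw [tsum_eq_single (default : FactIdx (1 : Word n))
      (fun b hb => absurd (Unique.eq_default b) hb)]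
    have : (default : FactIdx (1 : Word n)).1 = [] := bIndex_unique_of_one _
    rw [this]
    simp
  · rfl

lemma hasSum_bCoeff {n : ℕ} (a : Word n → ℝ) (α : Word n) :
    HasSum (fun y : {x : Idx n // wprod x.2 = α} => ∏ i, a (y.1.2 i).1) (bCoeff a α) := by
  haveI : Finite {x : Idx n // wprod x.2 = α} := fib_finite α
  have hs : Summable (fun y : {x : Idx n // wprod x.2 = α} => ∏ i, a (y.1.2 i).1) :=
    Summable.of_finite
  have := hs.hasSum
  have heq : ∑' y : {x : Idx n // wprod x.2 = α}, ∏ i, a (y.1.2 i).1 = bCoeff a α := by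
    rw [bCoeff_eq_tsum]
    rw [← (Equiv.ofBijective _ (fibToFact_bijective (n := n) α)).tsum_eq
      (fun L : FactIdx α => (L.1.map a).prod)]
    refine tsum_congr fun y => ?_
    show ∏ i, a (y.1.2 i).1 = ((List.ofFn fun i => (y.1.2 i).1).map a).prod
    rw [List.map_ofFn, List.prod_ofFn]
    rfl
  rwa [heq] at this

lemma prod_map_of {n : ℕ} (l : List (Fin n)) :
    (l.map FreeMonoid.of).prod = FreeMonoid.ofList l := by
  induction l with
  | nil => rfl
  | cons x xs ih =>
    rw [List.map_cons, List.prod_cons, ih]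
    rfl

lemma bCoeff_pos {n : ℕ} {a : Word n → ℝ} (ha0 : ∀ α, 0 ≤ a α)
    (hai : ∀ i : Fin n, 0 < a (FreeMonoid.of i)) (α : Word n) : 0 < bCoeff a α := by
  have hb := hasSum_bCoeff a α
  set L₀ : List (Word n) := (FreeMonoid.toList α).map FreeMonoid.of with hL₀
  have hL₀prod : L₀.prod = α := by rw [hL₀, prod_map_of]; rfl
  have hL₀mem : ∀ w ∈ L₀, w ≠ 1 := by
    intro w hw
    rw [hL₀, List.mem_map] at hw
    obtain ⟨i, _, rfl⟩ := hw
    intro hone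
    have := congrArg wordLen hone
    simp [wordLen] at this
  obtain ⟨y₀, hy₀⟩ := (fibToFact_bijective (n := n) α).2 ⟨L₀, hL₀prod, hL₀mem⟩
  have hval : (∏ i, a (y₀.1.2 i).1) = (L₀.map a).prod := by
    have h1 : (fibToFact y₀).1 = L₀ := congrArg Subtype.val hy₀
    rw [← h1]
    show ∏ i, a (y₀.1.2 i).1 = ((List.ofFn fun i => (y₀.1.2 i).1).map a).prod
    rw [List.map_ofFn, List.prod_ofFn]
    rfl
  have hpos : 0 < ∏ i, a (y₀.1.2 i).1 := by
    rw [hval, hL₀]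
    rw [List.map_map]
    apply List.prod_pos
    intro x hx
    rw [List.mem_map] at hx
    obtain ⟨i, _, rfl⟩ := hx
    exact hai i
  calc (0 : ℝ) < ∏ i, a (y₀.1.2 i).1 := hpos
  _ ≤ bCoeff a α := le_hasSum hb y₀ fun y _ => Finset.prod_nonneg fun i _ => ha0 _

section Analysis

variable {n : ℕ} {H : Type*} [NormedAddCommGroup H] [InnerProductSpace ℂ H] [CompleteSpace H]

lemma opWord_one (T : Fin n → H →L[ℂ] H) : opWord T 1 = 1 := rfl

lemma opWord_mul (T : Fin n → H →L[ℂ] H) (α β : Word n) :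
    opWord T (α * β) = opWord T α ∘L opWord T β := by
  show ((FreeMonoid.toList (α * β)).map T).prod = _
  rw [FreeMonoid.toList_mul, List.map_append, List.prod_append]
  rfl

/-- The operators `Φ^[j] 1 - Φ^[j+1] 1`. -/
noncomputable def Xop (Φ : (H →L[ℂ] H) → (H →L[ℂ] H)) (j : ℕ) : H →L[ℂ] H :=
  Φ^[j] 1 - Φ^[j + 1] 1

/-- Complex-valued summand over tuples. -/
noncomputable def Fterm (a : Word n → ℝ) (T : Fin n → H →L[ℂ] H) (Δ : H →L[ℂ] H)
    (h h' : H) {j : ℕ} (t : Fin j → NEW n) : ℂ :=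
  ((∏ i, a (t i).1 : ℝ) : ℂ) *
    inner ℂ (Δ ((opWord T (wprod t)).adjoint h)) (Δ ((opWord T (wprod t)).adjoint h'))

/-- Real-valued diagonal summand over tuples. -/
noncomputable def fterm (a : Word n → ℝ) (T : Fin n → H →L[ℂ] H) (Δ : H →L[ℂ] H)
    (h : H) {j : ℕ} (t : Fin j → NEW n) : ℝ :=
  (∏ i, a (t i).1) * ‖Δ ((opWord T (wprod t)).adjoint h)‖ ^ 2

lemma fterm_nonneg {a : Word n → ℝ} (ha : ∀ α, 0 ≤ a α) (T : Fin n → H →L[ℂ] H)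
    (Δ : H →L[ℂ] H) (h : H) {j : ℕ} (t : Fin j → NEW n) : 0 ≤ fterm a T Δ h t :=
  mul_nonneg (Finset.prod_nonneg fun i _ => ha _) (sq_nonneg _)

lemma Fterm_diag (a : Word n → ℝ) (T : Fin n → H →L[ℂ] H) (Δ : H →L[ℂ] H) (h : H)
    {j : ℕ} (t : Fin j → NEW n) : Fterm a T Δ h h t = (fterm a T Δ h t : ℂ) := by
  rw [Fterm, fterm, inner_self_eq_norm_sq_to_K, Complex.ofReal_mul, Complex.ofReal_pow]
  rfl

lemma norm_Fterm_le {a : Word n → ℝ} (ha : ∀ α, 0 ≤ a α) (T : Fin n → H →L[ℂ] H)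
    (Δ : H →L[ℂ] H) (h h' : H) {j : ℕ} (t : Fin j → NEW n) :
    ‖Fterm a T Δ h h' t‖ ≤ (fterm a T Δ h t + fterm a T Δ h' t) / 2 := by
  rw [Fterm, fterm, fterm]
  set c : ℝ := ∏ i, a (t i).1 with hc
  have hc0 : 0 ≤ c := Finset.prod_nonneg fun i _ => ha _
  set u := Δ ((opWord T (wprod t)).adjoint h)
  set v := Δ ((opWord T (wprod t)).adjoint h')
  rw [norm_mul, Complex.norm_real, Real.norm_eq_abs, abs_of_nonneg hc0]
  have h1 : ‖(inner ℂ u v : ℂ)‖ ≤ ‖u‖ * ‖v‖ := norm_inner_le_norm u v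
  have h2 : ‖u‖ * ‖v‖ ≤ (‖u‖ ^ 2 + ‖v‖ ^ 2) / 2 := by nlinarith [sq_nonneg (‖u‖ - ‖v‖)]
  calc c * ‖(inner ℂ u v : ℂ)‖ ≤ c * ((‖u‖ ^ 2 + ‖v‖ ^ 2) / 2) :=
        mul_le_mul_of_nonneg_left (h1.trans h2) hc0
  _ = (c * ‖u‖ ^ 2 + c * ‖v‖ ^ 2) / 2 := by ring

lemma Fterm_cons (a : Word n → ℝ) (T : Fin n → H →L[ℂ] H) (Δ : H →L[ℂ] H)
    (h h' : H) {j : ℕ} (γ : NEW n) (s : Fin j → NEW n) :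
    Fterm a T Δ h h' (Fin.cons γ s) =
      (a γ.1 : ℂ) * Fterm a T Δ ((opWord T γ.1).adjoint h) ((opWord T γ.1).adjoint h') s := by
  rw [Fterm, Fterm, wprod_cons, opWord_mul, ContinuousLinearMap.adjoint_comp]
  simp only [ContinuousLinearMap.coe_comp', Function.comp_apply]
  rw [Fin.prod_univ_succ]
  push_cast
  simp only [Fin.cons_zero, Fin.cons_succ]
  ring

lemma fterm_cons (a : Word n → ℝ) (T : Fin n → H →L[ℂ] H) (Δ : H →L[ℂ] H)
    (h : H) {j : ℕ} (γ : NEW n) (s : Fin j → NEW n) :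
    fterm a T Δ h (Fin.cons γ s) =
      a γ.1 * fterm a T Δ ((opWord T γ.1).adjoint h) s := by
  rw [fterm, fterm, wprod_cons, opWord_mul, ContinuousLinearMap.adjoint_comp]
  simp only [ContinuousLinearMap.coe_comp', Function.comp_apply]
  rw [Fin.prod_univ_succ]
  simp only [Fin.cons_zero, Fin.cons_succ]
  ring

variable {a : Word n → ℝ} {T : Fin n → H →L[ℂ] H} {Δ : H →L[ℂ] H}
  {Φ : (H →L[ℂ] H) → (H →L[ℂ] H)}

lemma phi_inner_sub (hΦ : IsPhi a T Φ) (A B : H →L[ℂ] H) (x y : H) :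
    (inner ℂ (Φ (A - B) x) y : ℂ) = (inner ℂ (Φ A x) y : ℂ) - (inner ℂ (Φ B x) y : ℂ) := by
  refine (hΦ (A - B) x y).unique ?_
  have h2 := (hΦ A x y).sub (hΦ B x y)
  have hfg : (fun γ : NEW n => (a γ.1 : ℂ) *
        (inner ℂ (opWord T γ.1 ((A - B) ((opWord T γ.1).adjoint x))) y : ℂ))
      = fun γ : NEW n => (a γ.1 : ℂ) *
          (inner ℂ (opWord T γ.1 (A ((opWord T γ.1).adjoint x))) y : ℂ)
        - (a γ.1 : ℂ) * (inner ℂ (opWord T γ.1 (B ((opWord T γ.1).adjoint x))) y : ℂ) := by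
    funext γ
    rw [ContinuousLinearMap.sub_apply, map_sub, inner_sub_left, mul_sub]
  rw [hfg]
  exact h2

lemma inner_Xop_succ (hΦ : IsPhi a T Φ) (j : ℕ) (x y : H) :
    (inner ℂ (Φ (Xop Φ j) x) y : ℂ) = (inner ℂ (Xop Φ (j + 1) x) y : ℂ) := by
  rw [Xop, phi_inner_sub hΦ]
  have e1 : Φ (Φ^[j] 1) = Φ^[j + 1] 1 := (Function.iterate_succ_apply' Φ j 1).symm
  have e2 : Φ (Φ^[j + 1] 1) = Φ^[j + 2] 1 := (Function.iterate_succ_apply' Φ (j + 1) 1).symm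
  rw [e1, e2, Xop, ContinuousLinearMap.sub_apply, inner_sub_left]

lemma hΦ_Xop (hΦ : IsPhi a T Φ) (j : ℕ) (x y : H) :
    HasSum (fun γ : NEW n => (a γ.1 : ℂ) *
        (inner ℂ (Xop Φ j ((opWord T γ.1).adjoint x)) ((opWord T γ.1).adjoint y) : ℂ))
      ((inner ℂ (Xop Φ (j + 1) x) y : ℂ)) := by
  have h0 := hΦ (Xop Φ j) x y
  rw [inner_Xop_succ hΦ] at h0
  have hfg : (fun γ : NEW n => (a γ.1 : ℂ) *
        (inner ℂ (opWord T γ.1 (Xop Φ j ((opWord T γ.1).adjoint x))) y : ℂ))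
      = fun γ : NEW n => (a γ.1 : ℂ) *
          (inner ℂ (Xop Φ j ((opWord T γ.1).adjoint x)) ((opWord T γ.1).adjoint y) : ℂ) := by
    funext γ
    rw [← ContinuousLinearMap.adjoint_inner_right]
  rw [hfg] at h0
  exact h0

lemma adjoint_one : ContinuousLinearMap.adjoint (1 : H →L[ℂ] H) = 1 := by
  rw [ContinuousLinearMap.one_def, ContinuousLinearMap.adjoint_id]

lemma Xop_zero (hΔsq : Δ ∘L Δ = 1 - Φ 1) : Xop Φ 0 = Δ ∘L Δ := by
  rw [Xop]
  simp only [Function.iterate_zero, id_eq, Function.iterate_one, zero_add]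
  exact hΔsq.symm

lemma diag_hasSum (ha : ∀ α, 0 ≤ a α) (hΦ : IsPhi a T Φ)
    (hΔadj : ContinuousLinearMap.adjoint Δ = Δ) (hΔsq : Δ ∘L Δ = 1 - Φ 1) :
    ∀ (j : ℕ) (h : H),
      HasSum (fun t : Fin j → NEW n => fterm a T Δ h t)
        ((inner ℂ (Xop Φ j h) h : ℂ).re) := by
  intro j
  induction j with
  | zero =>
    intro h
    have hval : fterm a T Δ h (default : Fin 0 → NEW n) = ((inner ℂ (Xop Φ 0 h) h : ℂ)).re := by
      rw [Xop_zero hΔsq, fterm, wprod_nil, opWord_one, adjoint_one]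
      have h2 : (inner ℂ ((Δ ∘L Δ) h) h : ℂ) = inner ℂ (Δ h) (Δ h) := by
        have h3 := ContinuousLinearMap.adjoint_inner_left Δ h (Δ h)
        rw [hΔadj] at h3
        rw [ContinuousLinearMap.comp_apply]
        exact h3
      have h4 : (inner ℂ (Δ h) (Δ h) : ℂ).re = ‖Δ h‖ ^ 2 := by
        rw [← RCLike.re_to_complex]
        exact inner_self_eq_norm_sq (Δ h)
      rw [h2, h4]
      simp
    have h2 := hasSum_single (f := fun t : Fin 0 → NEW n => fterm a T Δ h t) default
      (fun b hb => absurd (Unique.eq_default b) hb)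
    convert h2 using 1
    exact hval.symm
  | succ j IH =>
    intro h
    have key : ∀ γ : NEW n,
        HasSum (fun s : Fin j → NEW n => fterm a T Δ h (Fin.cons γ s))
          (a γ.1 * ((inner ℂ (Xop Φ j ((opWord T γ.1).adjoint h))
            ((opWord T γ.1).adjoint h) : ℂ)).re) := by
      intro γ
      have h1 := (IH ((opWord T γ.1).adjoint h)).mul_left (a γ.1)
      have hfg : (fun s : Fin j → NEW n =>
            a γ.1 * fterm a T Δ ((opWord T γ.1).adjoint h) s)
          = fun s => fterm a T Δ h (Fin.cons γ s) := by
        funext s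
        rw [fterm_cons]
      rwa [hfg] at h1
    have outer : HasSum (fun γ : NEW n =>
        a γ.1 * ((inner ℂ (Xop Φ j ((opWord T γ.1).adjoint h))
          ((opWord T γ.1).adjoint h) : ℂ)).re)
        ((inner ℂ (Xop Φ (j + 1) h) h : ℂ).re) := by
      have h0 := (hΦ_Xop hΦ j h h).mapL Complex.reCLM
      have hfg : (fun γ : NEW n => Complex.reCLM ((a γ.1 : ℂ) *
            (inner ℂ (Xop Φ j ((opWord T γ.1).adjoint h)) ((opWord T γ.1).adjoint h) : ℂ)))
          = fun γ : NEW n => a γ.1 * ((inner ℂ (Xop Φ j ((opWord T γ.1).adjoint h))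
              ((opWord T γ.1).adjoint h) : ℂ)).re := by
        funext γ
        simp [Complex.mul_re]
      rwa [hfg] at h0
    have hnn : (0 : NEW n × (Fin j → NEW n) → ℝ) ≤
        fun p => fterm a T Δ h (Fin.cons p.1 p.2) :=
      fun p => fterm_nonneg ha T Δ h _
    have hsummable : Summable
        (fun p : NEW n × (Fin j → NEW n) => fterm a T Δ h (Fin.cons p.1 p.2)) := by
      rw [summable_prod_of_nonneg hnn]
      refine ⟨fun γ => (key γ).summable, ?_⟩
      have hfg : (fun γ : NEW n => ∑' s : Fin j → NEW n, fterm a T Δ h (Fin.cons γ s))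
          = fun γ : NEW n => a γ.1 * ((inner ℂ (Xop Φ j ((opWord T γ.1).adjoint h))
              ((opWord T γ.1).adjoint h) : ℂ)).re :=
        funext fun γ => (key γ).tsum_eq
      rw [hfg]
      exact outer.summable
    have hts : ∑' p : NEW n × (Fin j → NEW n), fterm a T Δ h (Fin.cons p.1 p.2)
        = ((inner ℂ (Xop Φ (j + 1) h) h : ℂ)).re := by
      rw [Summable.tsum_prod' hsummable (fun γ => (key γ).summable),
        tsum_congr (fun γ => (key γ).tsum_eq)]
      exact outer.tsum_eq
    have hps := hsummable.hasSum
    rw [hts] at hps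
    exact ((Fin.consEquiv (fun _ : Fin (j + 1) => NEW n)).hasSum_iff).mp hps

lemma fib_hasSum (ha : ∀ α, 0 ≤ a α) (hΦ : IsPhi a T Φ)
    (hΔadj : ContinuousLinearMap.adjoint Δ = Δ) (hΔsq : Δ ∘L Δ = 1 - Φ 1) :
    ∀ (j : ℕ) (h h' : H),
      HasSum (fun t : Fin j → NEW n => Fterm a T Δ h h' t) (inner ℂ (Xop Φ j h) h' : ℂ) := by
  intro j
  induction j with
  | zero =>
    intro h h'
    have hval : Fterm a T Δ h h' (default : Fin 0 → NEW n) = (inner ℂ (Xop Φ 0 h) h' : ℂ) := by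
      rw [Xop_zero hΔsq, Fterm, wprod_nil, opWord_one, adjoint_one]
      have h2 : (inner ℂ ((Δ ∘L Δ) h) h' : ℂ) = inner ℂ (Δ h) (Δ h') := by
        have h3 := ContinuousLinearMap.adjoint_inner_left Δ h' (Δ h)
        rw [hΔadj] at h3
        rw [ContinuousLinearMap.comp_apply]
        exact h3
      rw [h2]
      simp
    have h2 := hasSum_single (f := fun t : Fin 0 → NEW n => Fterm a T Δ h h' t) default
      (fun b hb => absurd (Unique.eq_default b) hb)
    convert h2 using 1
    exact hval.symm
  | succ j IH =>
    intro h h'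
    have hsumF : Summable (fun t : Fin (j + 1) → NEW n => Fterm a T Δ h h' t) :=
      Summable.of_norm_bounded
        (g := fun t => (fterm a T Δ h t + fterm a T Δ h' t) / 2)
        (((diag_hasSum ha hΦ hΔadj hΔsq (j + 1) h).summable.add
          (diag_hasSum ha hΦ hΔadj hΔsq (j + 1) h').summable).div_const 2)
        (fun t => norm_Fterm_le ha T Δ h h' t)
    have key : ∀ γ : NEW n,
        HasSum (fun s : Fin j → NEW n => Fterm a T Δ h h' (Fin.cons γ s))
          ((a γ.1 : ℂ) * (inner ℂ (Xop Φ j ((opWord T γ.1).adjoint h))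
            ((opWord T γ.1).adjoint h') : ℂ)) := by
      intro γ
      have h1 := (IH ((opWord T γ.1).adjoint h) ((opWord T γ.1).adjoint h')).mul_left
        ((a γ.1 : ℂ))
      have hfg : (fun s : Fin j → NEW n => (a γ.1 : ℂ) *
            Fterm a T Δ ((opWord T γ.1).adjoint h) ((opWord T γ.1).adjoint h') s)
          = fun s => Fterm a T Δ h h' (Fin.cons γ s) := by
        funext s
        rw [Fterm_cons]
      rwa [hfg] at h1
    have outer := hΦ_Xop hΦ j h h'
    have ecomp : ((fun t : Fin (j + 1) → NEW n => Fterm a T Δ h h' t) ∘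
          ⇑(Fin.consEquiv (fun _ : Fin (j + 1) => NEW n)))
        = fun p : NEW n × (Fin j → NEW n) => Fterm a T Δ h h' (Fin.cons p.1 p.2) := by
      funext p
      rfl
    have hsummable : Summable
        (fun p : NEW n × (Fin j → NEW n) => Fterm a T Δ h h' (Fin.cons p.1 p.2)) := by
      have h5 := (Fin.consEquiv (fun _ : Fin (j + 1) => NEW n)).summable_iff.mpr hsumF
      rwa [ecomp] at h5
    have hts : ∑' p : NEW n × (Fin j → NEW n), Fterm a T Δ h h' (Fin.cons p.1 p.2)
        = (inner ℂ (Xop Φ (j + 1) h) h' : ℂ) := by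
      rw [Summable.tsum_prod' hsummable (fun γ => (key γ).summable),
        tsum_congr (fun γ => (key γ).tsum_eq)]
      exact outer.tsum_eq
    have hps := hsummable.hasSum
    rw [hts] at hps
    refine ((Fin.consEquiv (fun _ : Fin (j + 1) => NEW n)).hasSum_iff).mp ?_
    rwa [ecomp]
lemma iter_inner (ha : ∀ α, 0 ≤ a α) (hΦ : IsPhi a T Φ) :
    ∀ (m : ℕ) (x : H),
      (inner ℂ ((Φ^[m] 1) x) x : ℂ).im = 0 ∧ 0 ≤ (inner ℂ ((Φ^[m] 1) x) x : ℂ).re := by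
  intro m
  induction m with
  | zero =>
    intro x
    simp only [Function.iterate_zero, id_eq, ContinuousLinearMap.one_apply]
    exact ⟨inner_self_im (𝕜 := ℂ) x, inner_self_nonneg (𝕜 := ℂ) (x := x)⟩
  | succ m IHm =>
    intro x
    have hit : Φ^[m + 1] (1 : H →L[ℂ] H) = Φ (Φ^[m] 1) := Function.iterate_succ_apply' Φ m 1
    rw [hit]
    have hsum := hΦ (Φ^[m] 1) x x
    have hterm : ∀ γ : NEW n,
        (inner ℂ (opWord T γ.1 ((Φ^[m] 1) ((opWord T γ.1).adjoint x))) x : ℂ)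
          = inner ℂ ((Φ^[m] 1) ((opWord T γ.1).adjoint x)) ((opWord T γ.1).adjoint x) := by
      intro γ
      rw [← ContinuousLinearMap.adjoint_inner_right]
    constructor
    · have him := hsum.mapL Complex.imCLM
      have hz : (fun γ : NEW n => Complex.imCLM ((a γ.1 : ℂ) *
            (inner ℂ (opWord T γ.1 ((Φ^[m] 1) ((opWord T γ.1).adjoint x))) x : ℂ)))
          = fun _ => (0 : ℝ) := by
        funext γ
        have h1 := (IHm ((opWord T γ.1).adjoint x)).1
        simp [hterm γ, Complex.mul_im, h1]
      rw [hz] at him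
      exact (him.unique hasSum_zero)
    · have hre := hsum.mapL Complex.reCLM
      refine hre.nonneg fun γ => ?_
      have h1 := IHm ((opWord T γ.1).adjoint x)
      simp only [Complex.reCLM_apply, hterm γ, Complex.mul_re, Complex.ofReal_re,
        Complex.ofReal_im, zero_mul, sub_zero]
      exact mul_nonneg (ha _) h1.2

lemma master_hasSum (ha : ∀ α, 0 ≤ a α) (hΦ : IsPhi a T Φ)
    (hΔadj : ContinuousLinearMap.adjoint Δ = Δ) (hΔsq : Δ ∘L Δ = 1 - Φ 1)
    {Q : H →L[ℂ] H}
    (hQ : ∀ x : H, Tendsto (fun m => (Φ^[m] 1) x) atTop (𝓝 (Q x))) (h h' : H) :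
    HasSum (fun x : Idx n => Fterm a T Δ h h' x.2)
      ((inner ℂ h h' : ℂ) - (inner ℂ (Q h) h' : ℂ)) := by
  have hXop_inner : ∀ (j : ℕ) (u v : H), (inner ℂ (Xop Φ j u) v : ℂ)
      = (inner ℂ ((Φ^[j] 1) u) v : ℂ) - (inner ℂ ((Φ^[j + 1] 1) u) v : ℂ) := by
    intro j u v
    rw [Xop, ContinuousLinearMap.sub_apply, inner_sub_left]
  -- the diagonal sums over `j`
  have hδ : ∀ u : H, HasSum (fun j : ℕ => ((inner ℂ (Xop Φ j u) u : ℂ)).re)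
      (‖u‖ ^ 2 - ((inner ℂ (Q u) u : ℂ)).re) := by
    intro u
    have hnn : ∀ j, 0 ≤ ((inner ℂ (Xop Φ j u) u : ℂ)).re := fun j =>
      (diag_hasSum ha hΦ hΔadj hΔsq j u).nonneg fun t => fterm_nonneg ha T Δ u t
    rw [hasSum_iff_tendsto_nat_of_nonneg hnn]
    have htel : ∀ m : ℕ, ∑ j ∈ Finset.range m, ((inner ℂ (Xop Φ j u) u : ℂ)).re
        = ((inner ℂ ((Φ^[0] (1 : H →L[ℂ] H)) u) u : ℂ)).re
          - ((inner ℂ ((Φ^[m] 1) u) u : ℂ)).re := by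
      intro m
      rw [← Finset.sum_range_sub' (fun j => ((inner ℂ ((Φ^[j] (1 : H →L[ℂ] H)) u) u : ℂ)).re) m]
      exact Finset.sum_congr rfl fun j _ => by rw [hXop_inner, Complex.sub_re]
    have hlim : Tendsto (fun m => ((inner ℂ ((Φ^[m] (1 : H →L[ℂ] H)) u) u : ℂ)).re) atTop
        (𝓝 (((inner ℂ (Q u) u : ℂ)).re)) :=
      (Complex.continuous_re.tendsto _).comp ((hQ u).inner tendsto_const_nhds)
    have h0 : ((inner ℂ ((Φ^[0] (1 : H →L[ℂ] H)) u) u : ℂ)).re = ‖u‖ ^ 2 := by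
      simp only [Function.iterate_zero, id_eq, ContinuousLinearMap.one_apply]
      exact inner_self_eq_norm_sq (𝕜 := ℂ) u
    have hmain : Tendsto (fun m => ((inner ℂ ((Φ^[0] (1 : H →L[ℂ] H)) u) u : ℂ)).re
        - ((inner ℂ ((Φ^[m] (1 : H →L[ℂ] H)) u) u : ℂ)).re) atTop
        (𝓝 (((inner ℂ ((Φ^[0] (1 : H →L[ℂ] H)) u) u : ℂ)).re - ((inner ℂ (Q u) u : ℂ)).re)) :=
      tendsto_const_nhds.sub hlim
    have hmain2 := Tendsto.congr (fun m => (htel m).symm) hmain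
    rwa [h0] at hmain2
  -- real summability over the sigma type
  have hgsum : ∀ u : H, Summable (fun x : Idx n => fterm a T Δ u x.2) := by
    intro u
    have hnn2 : ∀ x : Idx n, 0 ≤ fterm a T Δ u x.2 := fun x => fterm_nonneg ha T Δ u x.2
    refine (summable_sigma_of_nonneg hnn2).mpr ⟨fun j => (diag_hasSum ha hΦ hΔadj hΔsq j u).summable, ?_⟩
    have hfg : (fun j : ℕ => ∑' t : Fin j → NEW n, fterm a T Δ u t)
        = fun j => ((inner ℂ (Xop Φ j u) u : ℂ)).re :=
      funext fun j => (diag_hasSum ha hΦ hΔadj hΔsq j u).tsum_eq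
    rw [hfg]
    exact (hδ u).summable
  have hGsum : Summable (fun x : Idx n => Fterm a T Δ h h' x.2) :=
    Summable.of_norm_bounded (g := fun x : Idx n => (fterm a T Δ h x.2 + fterm a T Δ h' x.2) / 2)
      (((hgsum h).add (hgsum h')).div_const 2)
      (fun x => norm_Fterm_le ha T Δ h h' x.2)
  -- regroup along the sigma decomposition
  have hsig := HasSum.sigma hGsum.hasSum (fun j => fib_hasSum ha hΦ hΔadj hΔsq j h h')
  have hcval : HasSum (fun j : ℕ => (inner ℂ (Xop Φ j h) h' : ℂ))
      ((inner ℂ h h' : ℂ) - (inner ℂ (Q h) h' : ℂ)) := by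
    have hs := hsig.summable.hasSum
    have htends := hs.tendsto_sum_nat
    have htel : ∀ m : ℕ, ∑ j ∈ Finset.range m, (inner ℂ (Xop Φ j h) h' : ℂ)
        = (inner ℂ ((Φ^[0] (1 : H →L[ℂ] H)) h) h' : ℂ)
          - (inner ℂ ((Φ^[m] 1) h) h' : ℂ) := by
      intro m
      rw [← Finset.sum_range_sub' (fun j => (inner ℂ ((Φ^[j] (1 : H →L[ℂ] H)) h) h' : ℂ)) m]
      exact Finset.sum_congr rfl fun j _ => by rw [hXop_inner]
    have h0 : (inner ℂ ((Φ^[0] (1 : H →L[ℂ] H)) h) h' : ℂ) = inner ℂ h h' := by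
      simp only [Function.iterate_zero, id_eq, ContinuousLinearMap.one_apply]
    have hlim2 : Tendsto (fun m => (inner ℂ ((Φ^[0] (1 : H →L[ℂ] H)) h) h' : ℂ)
        - (inner ℂ ((Φ^[m] (1 : H →L[ℂ] H)) h) h' : ℂ)) atTop
        (𝓝 ((inner ℂ ((Φ^[0] (1 : H →L[ℂ] H)) h) h' : ℂ) - (inner ℂ (Q h) h' : ℂ))) :=
      tendsto_const_nhds.sub ((hQ h).inner tendsto_const_nhds)
    rw [h0] at hlim2
    have htends2 := Tendsto.congr htel htends
    have hval := tendsto_nhds_unique htends2 hlim2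
    rw [← hval]
    exact hs
  have hval2 := hsig.unique hcval
  have hfin := hGsum.hasSum
  rwa [hval2] at hfin

lemma word_hasSum (ha : ∀ α, 0 ≤ a α) (hΦ : IsPhi a T Φ)
    (hΔadj : ContinuousLinearMap.adjoint Δ = Δ) (hΔsq : Δ ∘L Δ = 1 - Φ 1)
    {Q : H →L[ℂ] H}
    (hQ : ∀ x : H, Tendsto (fun m => (Φ^[m] 1) x) atTop (𝓝 (Q x))) (h h' : H) :
    HasSum (fun α : Word n => (bCoeff a α : ℂ) *
        (inner ℂ (Δ ((opWord T α).adjoint h)) (Δ ((opWord T α).adjoint h')) : ℂ))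
      ((inner ℂ h h' : ℂ) - (inner ℂ (Q h) h' : ℂ)) := by
  have master := master_hasSum ha hΦ hΔadj hΔsq hQ h h'
  have h1 := (Equiv.sigmaFiberEquiv (fun x : Idx n => wprod x.2)).hasSum_iff.mpr master
  refine HasSum.sigma h1 ?_
  intro α
  have hfg : (fun y : {x : Idx n // wprod x.2 = α} =>
        ((fun x : Idx n => Fterm a T Δ h h' x.2) ∘
          (Equiv.sigmaFiberEquiv (fun x : Idx n => wprod x.2))) ⟨α, y⟩)
      = fun y : {x : Idx n // wprod x.2 = α} => ((∏ i, a (y.1.2 i).1 : ℝ) : ℂ) *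
          (inner ℂ (Δ ((opWord T α).adjoint h)) (Δ ((opWord T α).adjoint h')) : ℂ) := by
    funext y
    show Fterm a T Δ h h' y.1.2 = _
    rw [Fterm, y.2]
  rw [hfg]
  have hb : HasSum (fun y : {x : Idx n // wprod x.2 = α} =>
      ((∏ i, a (y.1.2 i).1 : ℝ) : ℂ)) ((bCoeff a α : ℝ) : ℂ) :=
    (hasSum_bCoeff a α).mapL Complex.ofRealCLM
  exact hb.mul_right _

end Analysis

/-- properties of the Poisson kernel `K_{f,T} h = Σ_α √(b_α) e_α ⊗ Δ T_α* h`
(identifying `F²(H_n) ⊗ D̄` with `ℓ²(F_n^+, H)` componentwise): it is a contraction,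
`K* K = I − Q`, it intertwines `T_i*` with `W_i* ⊗ I` (componentwise), and it is an
isometry if and only if `Q = 0`. -/
theorem poisson_kernel_properties {n : ℕ} {H : Type*} [NormedAddCommGroup H]
    [InnerProductSpace ℂ H] [CompleteSpace H]
    (a : Word n → ℝ) (hreg : PosRegular a)
    (T : Fin n → H →L[ℂ] H) (Φ : (H →L[ℂ] H) → (H →L[ℂ] H))
    (hΦ : IsPhi a T Φ)
    (hdom : ((1 : H →L[ℂ] H) - Φ 1).IsPositive)
    (Δ : H →L[ℂ] H) (hΔpos : Δ.IsPositive) (hΔsq : Δ ∘L Δ = 1 - Φ 1)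
    (Q : H →L[ℂ] H)
    (hQ : ∀ x : H, Tendsto (fun m => (Φ^[m] 1) x) atTop (𝓝 (Q x))) :
    (∀ h : H,
      Summable (fun α : Word n => ‖Real.sqrt (bCoeff a α) • Δ ((opWord T α).adjoint h)‖ ^ 2) ∧
      (∑' α : Word n, ‖Real.sqrt (bCoeff a α) • Δ ((opWord T α).adjoint h)‖ ^ 2) ≤ ‖h‖ ^ 2) ∧
    (∀ h h' : H,
      HasSum (fun α : Word n =>
          (inner ℂ (Real.sqrt (bCoeff a α) • Δ ((opWord T α).adjoint h))
            (Real.sqrt (bCoeff a α) • Δ ((opWord T α).adjoint h')) : ℂ))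
        ((inner ℂ h h' : ℂ) - (inner ℂ (Q h) h' : ℂ))) ∧
    (∀ (i : Fin n) (h : H) (α : Word n),
      Real.sqrt (bCoeff a α) • Δ ((opWord T α).adjoint ((T i).adjoint h)) =
        Real.sqrt (bCoeff a α / bCoeff a (FreeMonoid.of i * α)) •
          (Real.sqrt (bCoeff a (FreeMonoid.of i * α)) •
            Δ ((opWord T (FreeMonoid.of i * α)).adjoint h))) ∧
    ((∀ h : H,
        (∑' α : Word n, ‖Real.sqrt (bCoeff a α) • Δ ((opWord T α).adjoint h)‖ ^ 2) = ‖h‖ ^ 2)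
      ↔ Q = 0) := by
  obtain ⟨ha1, ha0, hai, -⟩ := hreg
  have hΔadj : ContinuousLinearMap.adjoint Δ = Δ := by
    have h1 := hΔpos.isSelfAdjoint
    rwa [IsSelfAdjoint, ContinuousLinearMap.star_eq_adjoint] at h1
  have hbpos : ∀ α : Word n, 0 < bCoeff a α := bCoeff_pos ha0 hai
  have hsummand : ∀ (h h' : H) (α : Word n),
      (inner ℂ (Real.sqrt (bCoeff a α) • Δ ((opWord T α).adjoint h))
        (Real.sqrt (bCoeff a α) • Δ ((opWord T α).adjoint h')) : ℂ)
      = (bCoeff a α : ℂ) *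
          (inner ℂ (Δ ((opWord T α).adjoint h)) (Δ ((opWord T α).adjoint h')) : ℂ) := by
    intro h h' α
    rw [← Complex.coe_smul, ← Complex.coe_smul, inner_smul_left, inner_smul_right,
      Complex.conj_ofReal, ← mul_assoc, ← Complex.ofReal_mul,
      Real.mul_self_sqrt (hbpos α).le]
  have claim2 : ∀ h h' : H,
      HasSum (fun α : Word n =>
          (inner ℂ (Real.sqrt (bCoeff a α) • Δ ((opWord T α).adjoint h))
            (Real.sqrt (bCoeff a α) • Δ ((opWord T α).adjoint h')) : ℂ))
        ((inner ℂ h h' : ℂ) - (inner ℂ (Q h) h' : ℂ)) := by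
    intro h h'
    have hw := word_hasSum ha0 hΦ hΔadj hΔsq hQ h h'
    have hfg : (fun α : Word n => (bCoeff a α : ℂ) *
          (inner ℂ (Δ ((opWord T α).adjoint h)) (Δ ((opWord T α).adjoint h')) : ℂ))
        = fun α : Word n =>
          (inner ℂ (Real.sqrt (bCoeff a α) • Δ ((opWord T α).adjoint h))
            (Real.sqrt (bCoeff a α) • Δ ((opWord T α).adjoint h')) : ℂ) :=
      funext fun α => (hsummand h h' α).symm
    rwa [hfg] at hw
  have hQinner : ∀ x : H, Tendsto (fun m => (inner ℂ ((Φ^[m] 1) x) x : ℂ)) atTop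
      (𝓝 ((inner ℂ (Q x) x : ℂ))) := fun x => (hQ x).inner tendsto_const_nhds
  have hQre : ∀ x : H, 0 ≤ (inner ℂ (Q x) x : ℂ).re := by
    intro x
    have h1 := (Complex.continuous_re.tendsto _).comp (hQinner x)
    exact ge_of_tendsto h1 (Eventually.of_forall fun m => (iter_inner ha0 hΦ m x).2)
  have hQim : ∀ x : H, (inner ℂ (Q x) x : ℂ).im = 0 := by
    intro x
    have h1 := (Complex.continuous_im.tendsto _).comp (hQinner x)
    have h2 : Tendsto (fun _ : ℕ => (0 : ℝ)) atTop (𝓝 ((inner ℂ (Q x) x : ℂ).im)) :=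
      h1.congr fun m => (iter_inner ha0 hΦ m x).1
    exact tendsto_nhds_unique h2 tendsto_const_nhds
  have claim1sum : ∀ h : H,
      HasSum (fun α : Word n => ‖Real.sqrt (bCoeff a α) • Δ ((opWord T α).adjoint h)‖ ^ 2)
        (‖h‖ ^ 2 - (inner ℂ (Q h) h : ℂ).re) := by
    intro h
    have h1 := (claim2 h h).mapL Complex.reCLM
    have hfg : (fun α : Word n => Complex.reCLM
          (inner ℂ (Real.sqrt (bCoeff a α) • Δ ((opWord T α).adjoint h))
            (Real.sqrt (bCoeff a α) • Δ ((opWord T α).adjoint h)) : ℂ))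
        = fun α : Word n => ‖Real.sqrt (bCoeff a α) • Δ ((opWord T α).adjoint h)‖ ^ 2 := by
      funext α
      exact inner_self_eq_norm_sq (𝕜 := ℂ) _
    have hv : Complex.reCLM ((inner ℂ h h : ℂ) - (inner ℂ (Q h) h : ℂ))
        = ‖h‖ ^ 2 - (inner ℂ (Q h) h : ℂ).re := by
      rw [Complex.reCLM_apply, Complex.sub_re]
      congr 1
      exact inner_self_eq_norm_sq (𝕜 := ℂ) h
    rwa [hfg, hv] at h1
  refine ⟨?_, claim2, ?_, ?_⟩
  · intro h
    refine ⟨(claim1sum h).summable, ?_⟩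
    rw [(claim1sum h).tsum_eq]
    linarith [hQre h]
  · intro i h α
    have hop : opWord T (FreeMonoid.of i * α) = T i ∘L opWord T α := by
      rw [opWord_mul]
      congr 1
    rw [hop, ContinuousLinearMap.adjoint_comp, ContinuousLinearMap.coe_comp',
      Function.comp_apply, smul_smul]
    congr 1
    rw [← Real.sqrt_mul (div_nonneg (hbpos α).le (hbpos (FreeMonoid.of i * α)).le),
      div_mul_cancel₀ _ (ne_of_gt (hbpos (FreeMonoid.of i * α)))]
  · constructor
    · intro hiso
      have hre0 : ∀ h : H, (inner ℂ (Q h) h : ℂ).re = 0 := by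
        intro h
        have h1 := (claim1sum h).tsum_eq
        have h2 := hiso h
        have h3 := h1.symm.trans h2
        linarith
      have hz : ∀ h : H, (inner ℂ (Q h) h : ℂ) = 0 := by
        intro h
        apply Complex.ext <;> simp [hre0 h, hQim h]
      have hlin : (Q : H →ₗ[ℂ] H) = 0 := (inner_map_self_eq_zero _).mp fun x => hz x
      ext x
      have h4 := congrArg (fun f : H →ₗ[ℂ] H => f x) hlin
      simpa using h4
    · intro hQ0 h
      rw [(claim1sum h).tsum_eq, hQ0]
      simp

end NCDomain
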